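/- Let X have a density p w.r.t. Lebesgue measure with support an interval, cdf P, and let h ∈ L¹(p). Then for every x in the support, (1/p(x)) ∫_{-∞}^{x} (h(u) − E[h(X)]) p(u) du = −(1/p(x)) ∫_{x}^{∞} (h(u) − E[h(X)]) p(u) du, and if h is absolutely continuous this common value equals − E[ K(x, X) h'(X) ] where K(x,y) = P(x∧y)(1−P(x∨y))/(p(x)p(y)). -/

import Mathlib

open Real MeasureTheory Set

lemma fub1 (p h h' : ℝ → ℝ) (hmeas : Measurable p) (hnn : ∀ x, 0 ≤ p x)
    (hp : Integrable p) (h'meas : Measurable h')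
    (hh' : ∀ y, HasDerivAt h (h' y) y)
    (hL1 : Integrable (fun u => h u * p u)) (x : ℝ)
    (hJ : IntegrableOn (fun y => (∫ u in Iic y, p u) * h' y) (Iic x)) :
    ∫ y in Iic x, (∫ u in Iic y, p u) * h' y
      = h x * (∫ u in Iic x, p u) - ∫ u in Iic x, h u * p u := by
  set P : ℝ → ℝ := fun t => ∫ u in Iic t, p u with hPdef
  have hPnn : ∀ t, 0 ≤ P t := fun t =>
    setIntegral_nonneg measurableSet_Iic (fun u _ => hnn u)
  set F : ℝ → ℝ → ℝ := fun y u => if u ≤ y ∧ y ≤ x then h' y * p u else 0 with hFdef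
  have hFmeas : AEStronglyMeasurable (Function.uncurry F)
      ((volume : Measure ℝ).prod volume) := by
    apply Measurable.aestronglyMeasurable
    apply Measurable.ite
    · exact (measurableSet_le measurable_snd measurable_fst).inter
        (measurableSet_le measurable_fst measurable_const)
    · exact (h'meas.comp measurable_fst).mul (hmeas.comp measurable_snd)
    · exact measurable_const
  have hFeq : ∀ y, y ≤ x → (fun u => F y u) = (Iic y).indicator (fun u => h' y * p u) := by
    intro y hy
    funext u
    by_cases hu : u ≤ y
    · simp [hFdef, hu, hy, indicator_of_mem (mem_Iic.2 hu)]
    · simp [hFdef, hu, indicator_of_notMem (fun hc => hu (mem_Iic.1 hc))]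
  have hFeq' : ∀ y, ¬ y ≤ x → (fun u => F y u) = fun _ => (0:ℝ) := by
    intro y hy; funext u; exact if_neg (fun hc => hy hc.2)
  have hsec : ∀ y, Integrable (fun u => F y u) := by
    intro y
    by_cases hy : y ≤ x
    · rw [hFeq y hy, integrable_indicator_iff measurableSet_Iic]
      exact (hp.const_mul _).integrableOn
    · rw [hFeq' y hy]; exact integrable_zero _ _ _
  have hnorm : ∀ y, (∫ u, ‖F y u‖) = (Iic x).indicator (fun y => ‖P y * h' y‖) y := by
    intro y
    by_cases hy : y ≤ x
    · have hFy : ∀ u, F y u = (Iic y).indicator (fun u => h' y * p u) u :=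
        fun u => congrFun (hFeq y hy) u
      simp only [hFy]
      rw [indicator_of_mem (mem_Iic.2 hy)]
      have heq : ∀ u, ‖(Iic y).indicator (fun u => h' y * p u) u‖
          = (Iic y).indicator (fun u => ‖h' y‖ * p u) u := by
        intro u
        by_cases hu : u ∈ Iic y
        · simp [indicator_of_mem hu, norm_mul, abs_of_nonneg (hnn u)]
        · simp [indicator_of_notMem hu]
      simp_rw [heq]
      rw [integral_indicator measurableSet_Iic, integral_const_mul]
      rw [norm_mul, Real.norm_eq_abs, Real.norm_eq_abs, abs_of_nonneg (hPnn y)]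
      ring
    · have hFy : ∀ u, F y u = 0 := fun u => congrFun (hFeq' y hy) u
      simp only [hFy]
      rw [indicator_of_notMem (fun hc => hy (mem_Iic.1 hc))]
      simp
  have hFint : Integrable (Function.uncurry F) (volume.prod volume) := by
    rw [integrable_prod_iff hFmeas]
    refine ⟨Filter.Eventually.of_forall hsec, ?_⟩
    have heq2 : (fun y => ∫ u, ‖Function.uncurry F (y, u)‖)
        = (Iic x).indicator (fun y => ‖P y * h' y‖) := funext hnorm
    rw [heq2]
    exact (integrable_indicator_iff measurableSet_Iic).2 hJ.norm
  have hswap := integral_integral_swap hFint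
  have hLHS : (fun y => ∫ u, F y u) = (Iic x).indicator (fun y => P y * h' y) := by
    funext y
    by_cases hy : y ≤ x
    · rw [hFeq y hy, integral_indicator measurableSet_Iic, integral_const_mul,
        indicator_of_mem (mem_Iic.2 hy)]
      ring
    · rw [hFeq' y hy, indicator_of_notMem (fun hc => hy (mem_Iic.1 hc))]
      simp
  have hsecu : ∀ᵐ u : ℝ, Integrable (fun y => F y u) := hFint.prod_left_ae
  have hae : ∀ᵐ u : ℝ, (∫ y, F y u) = (Iic x).indicator (fun u => (h x - h u) * p u) u := by
    filter_upwards [hsecu] with u hu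
    by_cases hux : u ≤ x
    · rw [indicator_of_mem (mem_Iic.2 hux)]
      by_cases hpu : p u = 0
      · have hz : (fun y => F y u) = fun _ => (0:ℝ) := by
          funext y; by_cases hc : u ≤ y ∧ y ≤ x <;> simp [hFdef, hc, hpu]
        rw [hz, hpu]
        simp
      · have hset : (fun y => F y u) = (Icc u x).indicator (fun y => h' y * p u) := by
          funext y
          by_cases hc : y ∈ Icc u x
          · rw [indicator_of_mem hc]; exact if_pos (mem_Icc.1 hc)
          · rw [indicator_of_notMem hc]; exact if_neg (fun hcc => hc (mem_Icc.2 hcc))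
        have hio : IntegrableOn (fun y => h' y * p u) (Icc u x) := by
          rw [← integrable_indicator_iff measurableSet_Icc, ← hset]; exact hu
        have hio' : IntegrableOn h' (Icc u x) := by
          have h3 := hio.mul_const (p u)⁻¹
          have heq3 : (fun y => h' y * p u * (p u)⁻¹) = h' := by
            funext y; field_simp
          rwa [heq3] at h3
        have hII : IntervalIntegrable h' volume u x :=
          (intervalIntegrable_iff_integrableOn_Ioc_of_le hux).2
            (hio'.mono_set Ioc_subset_Icc_self)
        have hftc : ∫ t in u..x, h' t = h x - h u :=
          intervalIntegral.integral_eq_sub_of_hasDerivAt (fun t _ => hh' t) hII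
        rw [hset, integral_indicator measurableSet_Icc, integral_Icc_eq_integral_Ioc,
          integral_mul_const, ← intervalIntegral.integral_of_le hux, hftc]
    · have hz : (fun y => F y u) = fun _ => (0:ℝ) := by
        funext y
        exact if_neg (fun hc => hux (hc.1.trans hc.2))
      rw [hz, indicator_of_notMem (fun hc => hux (mem_Iic.1 hc))]
      simp
  calc ∫ y in Iic x, P y * h' y
      = ∫ y, (Iic x).indicator (fun y => P y * h' y) y := by
        rw [integral_indicator measurableSet_Iic]
    _ = ∫ y, ∫ u, F y u := by rw [hLHS]
    _ = ∫ u, ∫ y, F y u := hswap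
    _ = ∫ u, (Iic x).indicator (fun u => (h x - h u) * p u) u := integral_congr_ae hae
    _ = ∫ u in Iic x, (h x - h u) * p u := by rw [integral_indicator measurableSet_Iic]
    _ = h x * P x - ∫ u in Iic x, h u * p u := by
        have h1 : Integrable (fun u => h x * p u) (volume.restrict (Iic x)) :=
          hp.integrableOn.const_mul _
        have h2 : Integrable (fun u => h u * p u) (volume.restrict (Iic x)) :=
          hL1.integrableOn
        simp_rw [sub_mul]
        rw [integral_sub h1 h2, integral_const_mul]
lemma fub2 (p h h' : ℝ → ℝ) (hmeas : Measurable p) (hnn : ∀ x, 0 ≤ p x)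
    (hp : Integrable p) (h'meas : Measurable h')
    (hh' : ∀ y, HasDerivAt h (h' y) y)
    (hL1 : Integrable (fun u => h u * p u)) (x : ℝ)
    (hJ : IntegrableOn (fun y => (∫ u in Ioi y, p u) * h' y) (Ioi x)) :
    ∫ y in Ioi x, (∫ u in Ioi y, p u) * h' y
      = (∫ u in Ioi x, h u * p u) - h x * (∫ u in Ioi x, p u) := by
  set Q : ℝ → ℝ := fun t => ∫ u in Ioi t, p u with hQdef
  have hQnn : ∀ t, 0 ≤ Q t := fun t =>
    setIntegral_nonneg measurableSet_Ioi (fun u _ => hnn u)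
  set F : ℝ → ℝ → ℝ := fun y u => if x < y ∧ y < u then h' y * p u else 0 with hFdef
  have hFmeas : AEStronglyMeasurable (Function.uncurry F)
      ((volume : Measure ℝ).prod volume) := by
    apply Measurable.aestronglyMeasurable
    apply Measurable.ite
    · exact (measurableSet_lt measurable_const measurable_fst).inter
        (measurableSet_lt measurable_fst measurable_snd)
    · exact (h'meas.comp measurable_fst).mul (hmeas.comp measurable_snd)
    · exact measurable_const
  have hFeq : ∀ y, x < y → (fun u => F y u) = (Ioi y).indicator (fun u => h' y * p u) := by
    intro y hy
    funext u
    by_cases hu : y < u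
    · rw [indicator_of_mem (mem_Ioi.2 hu)]; exact if_pos ⟨hy, hu⟩
    · rw [indicator_of_notMem (fun hc => hu (mem_Ioi.1 hc))]
      exact if_neg (fun hc => hu hc.2)
  have hFeq' : ∀ y, ¬ x < y → (fun u => F y u) = fun _ => (0:ℝ) := by
    intro y hy; funext u; exact if_neg (fun hc => hy hc.1)
  have hsec : ∀ y, Integrable (fun u => F y u) := by
    intro y
    by_cases hy : x < y
    · rw [hFeq y hy, integrable_indicator_iff measurableSet_Ioi]
      exact (hp.const_mul _).integrableOn
    · rw [hFeq' y hy]; exact integrable_zero _ _ _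
  have hnorm : ∀ y, (∫ u, ‖F y u‖) = (Ioi x).indicator (fun y => ‖Q y * h' y‖) y := by
    intro y
    by_cases hy : x < y
    · have hFy : ∀ u, F y u = (Ioi y).indicator (fun u => h' y * p u) u :=
        fun u => congrFun (hFeq y hy) u
      simp only [hFy]
      rw [indicator_of_mem (mem_Ioi.2 hy)]
      have heq : ∀ u, ‖(Ioi y).indicator (fun u => h' y * p u) u‖
          = (Ioi y).indicator (fun u => ‖h' y‖ * p u) u := by
        intro u
        by_cases hu : u ∈ Ioi y
        · simp [indicator_of_mem hu, norm_mul, abs_of_nonneg (hnn u)]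
        · simp [indicator_of_notMem hu]
      simp_rw [heq]
      rw [integral_indicator measurableSet_Ioi, integral_const_mul]
      rw [norm_mul, Real.norm_eq_abs, Real.norm_eq_abs, abs_of_nonneg (hQnn y)]
      ring
    · have hFy : ∀ u, F y u = 0 := fun u => congrFun (hFeq' y hy) u
      simp only [hFy]
      rw [indicator_of_notMem (fun hc => hy (mem_Ioi.1 hc))]
      simp
  have hFint : Integrable (Function.uncurry F) (volume.prod volume) := by
    rw [integrable_prod_iff hFmeas]
    refine ⟨Filter.Eventually.of_forall hsec, ?_⟩
    have heq2 : (fun y => ∫ u, ‖Function.uncurry F (y, u)‖)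
        = (Ioi x).indicator (fun y => ‖Q y * h' y‖) := funext hnorm
    rw [heq2]
    exact (integrable_indicator_iff measurableSet_Ioi).2 hJ.norm
  have hswap := integral_integral_swap hFint
  have hLHS : (fun y => ∫ u, F y u) = (Ioi x).indicator (fun y => Q y * h' y) := by
    funext y
    by_cases hy : x < y
    · rw [hFeq y hy, integral_indicator measurableSet_Ioi, integral_const_mul,
        indicator_of_mem (mem_Ioi.2 hy)]
      ring
    · rw [hFeq' y hy, indicator_of_notMem (fun hc => hy (mem_Ioi.1 hc))]
      simp
  have hsecu : ∀ᵐ u : ℝ, Integrable (fun y => F y u) := hFint.prod_left_ae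
  have hae : ∀ᵐ u : ℝ, (∫ y, F y u) = (Ioi x).indicator (fun u => (h u - h x) * p u) u := by
    filter_upwards [hsecu] with u hu
    by_cases hux : x < u
    · rw [indicator_of_mem (mem_Ioi.2 hux)]
      by_cases hpu : p u = 0
      · have hz : (fun y => F y u) = fun _ => (0:ℝ) := by
          funext y; by_cases hc : x < y ∧ y < u <;> simp [hFdef, hc, hpu]
        rw [hz, hpu]
        simp
      · have hset : (fun y => F y u) = (Ioo x u).indicator (fun y => h' y * p u) := by
          funext y
          by_cases hc : y ∈ Ioo x u
          · rw [indicator_of_mem hc]; exact if_pos (mem_Ioo.1 hc)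
          · rw [indicator_of_notMem hc]; exact if_neg (fun hcc => hc (mem_Ioo.2 hcc))
        have hio : IntegrableOn (fun y => h' y * p u) (Ioo x u) := by
          rw [← integrable_indicator_iff measurableSet_Ioo, ← hset]; exact hu
        have hio' : IntegrableOn h' (Ioo x u) := by
          have h3 := hio.mul_const (p u)⁻¹
          have heq3 : (fun y => h' y * p u * (p u)⁻¹) = h' := by
            funext y; field_simp
          rwa [heq3] at h3
        have hII : IntervalIntegrable h' volume x u :=
          (intervalIntegrable_iff_integrableOn_Ioc_of_le hux.le).2
            ((integrableOn_Ioc_iff_integrableOn_Ioo (f := h') (a := x) (b := u) (by simp)).2 hio')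
        have hftc : ∫ t in x..u, h' t = h u - h x :=
          intervalIntegral.integral_eq_sub_of_hasDerivAt (fun t _ => hh' t) hII
        rw [hset, integral_indicator measurableSet_Ioo, ← integral_Ioc_eq_integral_Ioo,
          integral_mul_const, ← intervalIntegral.integral_of_le hux.le, hftc]
    · have hz : (fun y => F y u) = fun _ => (0:ℝ) := by
        funext y
        exact if_neg (fun hc => hux (hc.1.trans hc.2))
      rw [hz, indicator_of_notMem (fun hc => hux (mem_Ioi.1 hc))]
      simp
  calc ∫ y in Ioi x, Q y * h' y
      = ∫ y, (Ioi x).indicator (fun y => Q y * h' y) y := by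
        rw [integral_indicator measurableSet_Ioi]
    _ = ∫ y, ∫ u, F y u := by rw [hLHS]
    _ = ∫ u, ∫ y, F y u := hswap
    _ = ∫ u, (Ioi x).indicator (fun u => (h u - h x) * p u) u := integral_congr_ae hae
    _ = ∫ u in Ioi x, (h u - h x) * p u := by rw [integral_indicator measurableSet_Ioi]
    _ = (∫ u in Ioi x, h u * p u) - h x * (∫ u in Ioi x, p u) := by
        have h1 : Integrable (fun u => h x * p u) (volume.restrict (Ioi x)) :=
          hp.integrableOn.const_mul _
        have h2 : Integrable (fun u => h u * p u) (volume.restrict (Ioi x)) :=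
          hL1.integrableOn
        simp_rw [sub_mul]
        rw [integral_sub h2 h1, integral_const_mul]

theorem stmt12 (p : ℝ → ℝ) (hmeas : Measurable p) (hnn : ∀ x, 0 ≤ p x)
    (hsupp : Convex ℝ (Function.support p))
    (hmass : ∫ x, p x = 1)
    (h h' : ℝ → ℝ)
    (hh' : ∀ y, HasDerivAt h (h' y) y)
    (hL1 : Integrable (fun u => h u * p u))
    (hI1 : Integrable (fun u => (h u - ∫ v, h v * p v) * p u))
    (hI2 : ∀ x, Integrable (fun y =>
      ((∫ u in Set.Iic (min x y), p u) * (1 - ∫ u in Set.Iic (max x y), p u) /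
        (p x * p y)) * h' y * p y)) :
    ∀ x : ℝ, 0 < p x →
      ((p x)⁻¹ * ∫ u in Set.Iic x, (h u - ∫ v, h v * p v) * p u
        = -((p x)⁻¹ * ∫ u in Set.Ioi x, (h u - ∫ v, h v * p v) * p u)) ∧
      ((p x)⁻¹ * ∫ u in Set.Iic x, (h u - ∫ v, h v * p v) * p u
        = -∫ y, ((∫ u in Set.Iic (min x y), p u) * (1 - ∫ u in Set.Iic (max x y), p u) /
            (p x * p y)) * h' y * p y) := by
  have hp : Integrable p := integrable_of_integral_eq_one hmass
  have h'meas : Measurable h' := by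
    have hd : h' = deriv h := funext fun y => ((hh' y).deriv).symm
    rw [hd]; exact measurable_deriv h
  set m := ∫ v, h v * p v with hmdef
  have hPnn : ∀ t, 0 ≤ ∫ u in Iic t, p u := fun t =>
    setIntegral_nonneg measurableSet_Iic fun u _ => hnn u
  have hPle : ∀ t, (∫ u in Iic t, p u) ≤ 1 := fun t =>
    hmass ▸ setIntegral_le_integral hp (Filter.Eventually.of_forall hnn)
  have hQ : ∀ t, (∫ u in Ioi t, p u) = 1 - ∫ u in Iic t, p u := by
    intro t
    have h0 := intervalIntegral.integral_Iic_add_Ioi (b := t) hp.integrableOn hp.integrableOn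
    rw [hmass] at h0; linarith
  have hzero : ∀ y, p y = 0 → (∀ t, t ≤ y → p t = 0) ∨ (∀ t, y ≤ t → p t = 0) := by
    intro y hy
    by_contra hcon
    push_neg at hcon
    obtain ⟨⟨t₁, ht₁, h1⟩, ⟨t₂, ht₂, h2⟩⟩ := hcon
    have hmem : y ∈ Function.support p :=
      hsupp.ordConnected.out (by exact h1 : t₁ ∈ Function.support p)
        (by exact h2 : t₂ ∈ Function.support p) ⟨ht₁, ht₂⟩
    exact hmem hy
  -- total integral of (h - m) p is zero
  have htot : (∫ u, (h u - m) * p u) = 0 := by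
    have heq : (fun u => (h u - m) * p u) = fun u => h u * p u - m * p u := by
      funext u; ring
    rw [heq, integral_sub hL1 (hp.const_mul m), integral_const_mul, hmass, ← hmdef]
    ring
  intro x hx
  have hpx : p x ≠ 0 := ne_of_gt hx
  have hsplit := intervalIntegral.integral_Iic_add_Ioi (b := x) hI1.integrableOn hI1.integrableOn
  rw [htot] at hsplit
  have hTS : (∫ u in Iic x, (h u - m) * p u) = -(∫ u in Ioi x, (h u - m) * p u) := by
    linarith
  refine ⟨by rw [hTS]; ring, ?_⟩
  -- rewrite the kernel integrand
  have hKrw : ∀ y, ((∫ u in Set.Iic (min x y), p u) * (1 - ∫ u in Set.Iic (max x y), p u) /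
        (p x * p y)) * h' y * p y
      = (∫ u in Set.Iic (min x y), p u) * (1 - ∫ u in Set.Iic (max x y), p u) * h' y / p x := by
    intro y
    by_cases hpy : p y = 0
    · have hfac : (∫ u in Set.Iic (min x y), p u) * (1 - ∫ u in Set.Iic (max x y), p u) = 0 := by
        rcases hzero y hpy with hl | hr
        · have hz : (∫ u in Set.Iic (min x y), p u) = 0 :=
            setIntegral_eq_zero_of_forall_eq_zero fun t ht =>
              hl t ((mem_Iic.1 ht).trans (min_le_right x y))
          rw [hz, zero_mul]
        · have hz : (∫ u in Ioi (max x y), p u) = 0 :=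
            setIntegral_eq_zero_of_forall_eq_zero fun t ht =>
              hr t ((le_max_right x y).trans (mem_Ioi.1 ht).le)
          have hz2 : 1 - (∫ u in Set.Iic (max x y), p u) = 0 := by
            rw [← hQ (max x y)]; exact hz
          rw [hz2, mul_zero]
      rw [hpy, hfac]
      simp
    · field_simp
  have hKint : (∫ y, ((∫ u in Set.Iic (min x y), p u) * (1 - ∫ u in Set.Iic (max x y), p u) /
        (p x * p y)) * h' y * p y)
      = (∫ y, (∫ u in Set.Iic (min x y), p u) * (1 - ∫ u in Set.Iic (max x y), p u) * h' y)
        / p x := by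
    rw [← integral_div]
    exact integral_congr_ae (Filter.Eventually.of_forall hKrw)
  rw [hKint]
  -- main claim: the G-integral equals minus the Iic-integral
  have hGint : Integrable (fun y =>
      (∫ u in Set.Iic (min x y), p u) * (1 - ∫ u in Set.Iic (max x y), p u) * h' y) := by
    have h0 : Integrable (fun y =>
        ((∫ u in Set.Iic (min x y), p u) * (1 - ∫ u in Set.Iic (max x y), p u) * h' y) / p x) :=
      (hI2 x).congr (Filter.Eventually.of_forall hKrw)
    have h1 := h0.const_mul (p x)
    refine h1.congr (Filter.Eventually.of_forall fun y => ?_)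
    field_simp
  have hGval : (∫ y, (∫ u in Set.Iic (min x y), p u) * (1 - ∫ u in Set.Iic (max x y), p u) * h' y)
      = -(∫ u in Iic x, (h u - m) * p u) := by
    by_cases hP1 : (∫ u in Iic x, p u) = 1
    · -- degenerate right case : P x = 1
      have hQ0 : (∫ u in Ioi x, p u) = 0 := by rw [hQ x, hP1]; ring
      have pae : p =ᵐ[volume.restrict (Ioi x)] 0 :=
        (integral_eq_zero_iff_of_nonneg_ae (Filter.Eventually.of_forall hnn)
          hp.integrableOn).1 hQ0
      have hT0 : (∫ u in Iic x, (h u - m) * p u) = 0 := by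
        rw [hTS]
        have hz : (∫ u in Ioi x, (h u - m) * p u) = 0 := by
          apply integral_eq_zero_of_ae
          filter_upwards [pae] with u hu
          simp only [Pi.zero_apply] at hu
          simp [hu]
        rw [hz]; ring
      have hGzero : ∀ y,
          (∫ u in Set.Iic (min x y), p u) * (1 - ∫ u in Set.Iic (max x y), p u) * h' y = 0 := by
        intro y
        by_cases hy : y ≤ x
        · rw [max_eq_left hy, hP1]
          ring
        · push_neg at hy
          have hPy1 : (∫ u in Iic y, p u) = 1 := by
            have hd := intervalIntegral.integral_Iic_sub_Iic (a := x) (b := y)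
              hp.integrableOn hp.integrableOn
            have hz : (∫ u in x..y, p u) = 0 := by
              rw [intervalIntegral.integral_of_le hy.le]
              apply integral_eq_zero_of_ae
              exact ae_restrict_of_ae_restrict_of_subset Ioc_subset_Ioi_self pae
            rw [hz] at hd
            linarith [hd]
          rw [max_eq_right hy.le, hPy1]
          ring
      have hGz : (∫ y, (∫ u in Set.Iic (min x y), p u) *
          (1 - ∫ u in Set.Iic (max x y), p u) * h' y) = 0 := by
        rw [integral_congr_ae (Filter.Eventually.of_forall hGzero)]
        exact integral_zero _ _
      rw [hGz, hT0]; ring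
    · by_cases hP0 : (∫ u in Iic x, p u) = 0
      · -- degenerate left case : P x = 0
        have pae : p =ᵐ[volume.restrict (Iic x)] 0 :=
          (integral_eq_zero_iff_of_nonneg_ae (Filter.Eventually.of_forall hnn)
            hp.integrableOn).1 hP0
        have hT0 : (∫ u in Iic x, (h u - m) * p u) = 0 := by
          apply integral_eq_zero_of_ae
          filter_upwards [pae] with u hu
          simp only [Pi.zero_apply] at hu
          simp [hu]
        have hGzero : ∀ y,
            (∫ u in Set.Iic (min x y), p u) * (1 - ∫ u in Set.Iic (max x y), p u) * h' y = 0 := by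
          intro y
          by_cases hy : y ≤ x
          · have hPy0 : (∫ u in Iic y, p u) = 0 := by
              apply integral_eq_zero_of_ae
              exact ae_restrict_of_ae_restrict_of_subset (Iic_subset_Iic.2 hy) pae
            rw [min_eq_right hy, hPy0]
            ring
          · push_neg at hy
            rw [min_eq_left hy.le, hP0]
            ring
        have hGz : (∫ y, (∫ u in Set.Iic (min x y), p u) *
            (1 - ∫ u in Set.Iic (max x y), p u) * h' y) = 0 := by
          rw [integral_congr_ae (Filter.Eventually.of_forall hGzero)]
          exact integral_zero _ _
        rw [hGz, hT0]; ring
      · -- generic case : 0 < P x < 1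
        have hne1 : (1:ℝ) - (∫ u in Iic x, p u) ≠ 0 := sub_ne_zero.2 (Ne.symm hP1)
        -- split the G integral
        have hGIic : ∀ y ∈ Iic x,
            (∫ u in Set.Iic (min x y), p u) * (1 - ∫ u in Set.Iic (max x y), p u) * h' y
            = (1 - ∫ u in Iic x, p u) * ((∫ u in Iic y, p u) * h' y) := by
          intro y hy
          rw [min_eq_right (mem_Iic.1 hy), max_eq_left (mem_Iic.1 hy)]
          ring
        have hGIoi : ∀ y ∈ Ioi x,
            (∫ u in Set.Iic (min x y), p u) * (1 - ∫ u in Set.Iic (max x y), p u) * h' y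
            = (∫ u in Iic x, p u) * ((∫ u in Ioi y, p u) * h' y) := by
          intro y hy
          rw [min_eq_left (mem_Ioi.1 hy).le, max_eq_right (mem_Ioi.1 hy).le, hQ y]
          ring
        have hJ1 : IntegrableOn (fun y => (∫ u in Iic y, p u) * h' y) (Iic x) := by
          have h0 : IntegrableOn
              (fun y => (1 - ∫ u in Iic x, p u) * ((∫ u in Iic y, p u) * h' y)) (Iic x) :=
            (hGint.integrableOn).congr_fun hGIic measurableSet_Iic
          have h1 := h0.const_mul (1 - ∫ u in Iic x, p u)⁻¹
          refine IntegrableOn.congr_fun h1 (fun y _ => ?_) measurableSet_Iic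
          rw [inv_mul_cancel_left₀ hne1]
        have hJ2 : IntegrableOn (fun y => (∫ u in Ioi y, p u) * h' y) (Ioi x) := by
          have h0 : IntegrableOn
              (fun y => (∫ u in Iic x, p u) * ((∫ u in Ioi y, p u) * h' y)) (Ioi x) :=
            (hGint.integrableOn).congr_fun hGIoi measurableSet_Ioi
          have h1 := h0.const_mul (∫ u in Iic x, p u)⁻¹
          refine IntegrableOn.congr_fun h1 (fun y _ => ?_) measurableSet_Ioi
          rw [inv_mul_cancel_left₀ hP0]
        have hK1 := fub1 p h h' hmeas hnn hp h'meas hh' hL1 x hJ1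
        have hK2 := fub2 p h h' hmeas hnn hp h'meas hh' hL1 x hJ2
        have hsplitG := intervalIntegral.integral_Iic_add_Ioi (b := x)
          hGint.integrableOn hGint.integrableOn
        have hIic : (∫ y in Iic x, (∫ u in Set.Iic (min x y), p u) *
            (1 - ∫ u in Set.Iic (max x y), p u) * h' y)
            = (1 - ∫ u in Iic x, p u) * ((h x) * (∫ u in Iic x, p u)
                - ∫ u in Iic x, h u * p u) := by
          rw [setIntegral_congr_fun measurableSet_Iic hGIic, integral_const_mul, hK1]
        have hIoi : (∫ y in Ioi x, (∫ u in Set.Iic (min x y), p u) *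
            (1 - ∫ u in Set.Iic (max x y), p u) * h' y)
            = (∫ u in Iic x, p u) * ((∫ u in Ioi x, h u * p u)
                - (h x) * (∫ u in Ioi x, p u)) := by
          rw [setIntegral_congr_fun measurableSet_Ioi hGIoi, integral_const_mul, hK2]
        have hAB := intervalIntegral.integral_Iic_add_Ioi (b := x) hL1.integrableOn hL1.integrableOn
        -- expand T
        have hT : (∫ u in Iic x, (h u - m) * p u)
            = (∫ u in Iic x, h u * p u) - m * (∫ u in Iic x, p u) := by
          have heq : ∀ u, (h u - m) * p u = h u * p u - m * p u := fun u => by ring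
          rw [integral_congr_ae (Filter.Eventually.of_forall
            (fun u => heq u) : _ =ᵐ[volume.restrict (Iic x)] _)]
          rw [integral_sub hL1.integrableOn (hp.integrableOn.const_mul m), integral_const_mul]
        rw [← hsplitG, hIic, hIoi, hT, hQ x]
        have hABm : (∫ u in Iic x, h u * p u) + (∫ u in Ioi x, h u * p u) = m := by
          rw [hAB, ← hmdef]
        rw [← hABm]
        ring
  rw [hGval, hTS]
  field_simp
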